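/- arXiv:1303.3524 — 3 statements merged into one kernel-verified Lean document; each statement's English description precedes it below -/
import Mathlib

section
/- For every integer k ≥ 15, the smaller root z*_k = (5k − 12 − √(k² − 12k + 60))/6 of the quadratic 3z² + (12 − 5k)z + (2k² − 9k + 7) satisfies (2/3)k − 4/3 ≤ z*_k ≤ (2/3)k − 1, and moreover 0 ≤ z*_{k+1} − z*_k ≤ 1. -/
noncomputable def zstar (k : ℝ) : ℝ :=
  (5 * k - 12 - Real.sqrt (k ^ 2 - 12 * k + 60)) / 6

theorem stmt_9 (k : ℤ) (hk : 15 ≤ k) :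
    (2 / 3) * (k : ℝ) - 4 / 3 ≤ zstar k ∧ zstar k ≤ (2 / 3) * (k : ℝ) - 1 ∧
    0 ≤ zstar ((k : ℝ) + 1) - zstar k ∧ zstar ((k : ℝ) + 1) - zstar k ≤ 1 := by
  have hx : (15 : ℝ) ≤ (k : ℝ) := by exact_mod_cast hk
  set x : ℝ := (k : ℝ) with hxdef
  have h1 : Real.sqrt (x ^ 2 - 12 * x + 60) ≤ x - 4 := by
    have := Real.sqrt_le_sqrt (show x ^ 2 - 12 * x + 60 ≤ (x - 4) ^ 2 by nlinarith)
    rwa [Real.sqrt_sq (by linarith)] at this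
  have h2 : x - 6 ≤ Real.sqrt (x ^ 2 - 12 * x + 60) := by
    have := Real.sqrt_le_sqrt (show (x - 6) ^ 2 ≤ x ^ 2 - 12 * x + 60 by nlinarith)
    rwa [Real.sqrt_sq (by linarith)] at this
  have h3 : Real.sqrt ((x + 1) ^ 2 - 12 * (x + 1) + 60) ≤ x - 2 := by
    have := Real.sqrt_le_sqrt
      (show (x + 1) ^ 2 - 12 * (x + 1) + 60 ≤ (x - 2) ^ 2 by nlinarith)
    rwa [Real.sqrt_sq (by linarith)] at this
  have h4 : x - 5 ≤ Real.sqrt ((x + 1) ^ 2 - 12 * (x + 1) + 60) := by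
    have := Real.sqrt_le_sqrt
      (show (x - 5) ^ 2 ≤ (x + 1) ^ 2 - 12 * (x + 1) + 60 by nlinarith)
    rwa [Real.sqrt_sq (by linarith)] at this
  unfold zstar
  refine ⟨by linarith, by linarith, by linarith, by linarith⟩
end

section
/- With δ = 10⁻³: for every integer k ≥ 15 and every real λ ≥ (7k−1)/3, (1+δ)·(eλ/(k−1))^{k−1}·e^{1−(1−δ)λ}·(5/2)·λ^{5/3} ≤ 1. -/
lemma cube_bound : ((104:ℝ)/3) ^ ((5:ℝ)/3) ≤ 369 := by
  have h0 : (0:ℝ) ≤ (104:ℝ)/3 := by norm_num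
  have h3 : (((104:ℝ)/3) ^ ((5:ℝ)/3)) ^ (3:ℕ) ≤ (369:ℝ) ^ (3:ℕ) := by
    rw [← Real.rpow_natCast (((104:ℝ)/3) ^ ((5:ℝ)/3)) 3, ← Real.rpow_mul h0]
    have h5 : ((5:ℝ)/3 * ((3:ℕ):ℝ)) = ((5:ℕ):ℝ) := by push_cast; ring
    rw [h5, Real.rpow_natCast]
    norm_num
  exact le_of_pow_le_pow_left₀ (by norm_num) (by norm_num) h3

lemma numA : (1001/400:ℝ) * 369 * (7/3)^14 ≤ Real.exp (16428/875) := by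
  have he : (2.7182:ℝ) ≤ Real.exp 1 := le_of_lt (lt_trans (by norm_num) Real.exp_one_gt_d9)
  have h10 : ((1001/400:ℝ) * 369 * (7/3)^14) ^ (10:ℕ) ≤ Real.exp (16428/875) ^ (10:ℕ) := by
    calc ((1001/400:ℝ) * 369 * (7/3)^14) ^ (10:ℕ) ≤ (2.7182:ℝ)^(187:ℕ) := by norm_num
      _ ≤ Real.exp 1 ^ (187:ℕ) := pow_le_pow_left₀ (by norm_num) he 187
      _ = Real.exp 187 := by
          rw [← Real.exp_nat_mul, mul_one]; norm_num
      _ ≤ Real.exp (16428/875) ^ (10:ℕ) := by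
          rw [← Real.exp_nat_mul]
          exact Real.exp_le_exp.2 (by norm_num)
  exact le_of_pow_le_pow_left₀ (by norm_num) (Real.exp_nonneg _) h10

set_option maxHeartbeats 1000000 in
lemma key (n : ℕ) (lam : ℝ) (hlam : (7*(n:ℝ)+104)/3 ≤ lam) :
    (1 + 1 / 1000) * (Real.exp 1 * lam / ((n:ℝ) + 14)) ^ (n + 14) *
      Real.exp (1 - (1 - 1 / 1000) * lam) * (5 / 2) * lam ^ ((5 : ℝ) / 3) ≤ 1 := by
  have harg : (1:ℝ) - (1 - 1/1000)*lam = 1 - 999/1000*lam := by ring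
  rw [harg]
  obtain ⟨N, hNdef⟩ : ∃ m : ℕ, m = n + 14 := ⟨_, rfl⟩
  rw [← hNdef]
  obtain ⟨L, hLdef⟩ : ∃ x : ℝ, x = (7*(n:ℝ)+104)/3 := ⟨_, rfl⟩
  rw [← hLdef] at hlam
  have hn0 : (0:ℝ) ≤ (n:ℝ) := Nat.cast_nonneg n
  have hL : 0 < L := by rw [hLdef]; positivity
  have hlam0 : 0 < lam := lt_of_lt_of_le hL hlam
  have hM : (0:ℝ) < (n:ℝ) + 14 := by positivity
  have hNc : ((N:ℕ):ℝ) = (n:ℝ) + 14 := by rw [hNdef]; push_cast; ring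
  obtain ⟨t, htdef⟩ : ∃ x : ℝ, x = lam / L - 1 := ⟨_, rfl⟩
  have ht : 0 ≤ t := by
    have h1 : 1 ≤ lam / L := (one_le_div hL).2 hlam
    rw [htdef]; linarith
  have h1 : lam ≤ L * Real.exp t := by
    have hexp := Real.add_one_le_exp t
    have h2 : lam / L ≤ Real.exp t := by
      have heq : lam / L = t + 1 := by rw [htdef]; ring
      rw [heq]; exact hexp
    calc lam = L * (lam / L) := by field_simp
      _ ≤ L * Real.exp t := mul_le_mul_of_nonneg_left h2 hL.le
  -- rpow bound
  have h2' : lam ^ ((5:ℝ)/3) ≤ L ^ ((5:ℝ)/3) * Real.exp (t*(5/3)) := by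
    calc lam ^ ((5:ℝ)/3) ≤ (L * Real.exp t) ^ ((5:ℝ)/3) :=
          Real.rpow_le_rpow hlam0.le h1 (by norm_num)
      _ = L ^ ((5:ℝ)/3) * Real.exp t ^ ((5:ℝ)/3) := Real.mul_rpow hL.le (Real.exp_nonneg t)
      _ = L ^ ((5:ℝ)/3) * Real.exp (t*(5/3)) := by rw [Real.exp_mul]
  -- nat pow bound
  have hpow : lam ^ N ≤ L ^ N * Real.exp (((n:ℝ)+14)*t) := by
    calc lam ^ N ≤ (L * Real.exp t) ^ N := pow_le_pow_left₀ hlam0.le h1 _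
      _ = L ^ N * Real.exp t ^ N := mul_pow _ _ _
      _ = L ^ N * Real.exp (((N:ℕ):ℝ)*t) := by rw [Real.exp_nat_mul]
      _ = L ^ N * Real.exp (((n:ℝ)+14)*t) := by rw [hNc]
  -- exponent bound
  have hT : t * L = lam - L := by rw [htdef]; field_simp
  have hkey : (n:ℝ) + 14 + 5/3 ≤ 999/1000 * L := by rw [hLdef]; nlinarith
  have h4 : (n:ℝ)+14 + ((n:ℝ)+14)*t + (1 - 999/1000*lam) + t*(5/3)
      ≤ (n:ℝ)+14 + 1 - 999/1000*L := by
    have hm := mul_le_mul_of_nonneg_left hkey ht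
    have hm2 : t * (999/1000*L) = 999/1000*(lam - L) := by
      rw [show t*(999/1000*L) = 999/1000*(t*L) by ring, hT]
    linarith
  -- (L/M)^N bound
  have hm7 : (0:ℝ) < 7*(n:ℝ)+98 := by positivity
  have h5 : (L/((n:ℝ)+14)) ^ N ≤ (7/3:ℝ) ^ N * Real.exp (6/7) := by
    have hr : L / ((n:ℝ)+14) = 7/3 * ((7*(n:ℝ)+104)/(7*(n:ℝ)+98)) := by
      rw [hLdef]; field_simp; ring
    have hr2 : (7*(n:ℝ)+104)/(7*(n:ℝ)+98) ≤ Real.exp (6/(7*(n:ℝ)+98)) := by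
      have h := Real.add_one_le_exp (6/(7*(n:ℝ)+98))
      have heq : (7*(n:ℝ)+104)/(7*(n:ℝ)+98) = 6/(7*(n:ℝ)+98) + 1 := by
        field_simp
        ring
      rw [heq]; exact h
    have hr3 : (0:ℝ) ≤ (7*(n:ℝ)+104)/(7*(n:ℝ)+98) := by positivity
    calc (L/((n:ℝ)+14)) ^ N
        = (7/3:ℝ) ^ N * ((7*(n:ℝ)+104)/(7*(n:ℝ)+98)) ^ N := by rw [hr, mul_pow]
      _ ≤ (7/3:ℝ) ^ N * (Real.exp (6/(7*(n:ℝ)+98))) ^ N := by gcongr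
      _ = (7/3:ℝ) ^ N * Real.exp (((N:ℕ):ℝ) * (6/(7*(n:ℝ)+98))) := by
          rw [Real.exp_nat_mul]
      _ = (7/3:ℝ) ^ N * Real.exp (6/7) := by
          rw [hNc]
          congr 2
          field_simp
          ring
  -- L^{5/3} bound
  have h6 : L ^ ((5:ℝ)/3) ≤ 369 * Real.exp ((7*(n:ℝ)/104) * (5/3)) := by
    have hLe : L ≤ 104/3 * Real.exp (7*(n:ℝ)/104) := by
      have h := Real.add_one_le_exp (7*(n:ℝ)/104)
      have heq : L = 104/3 * (7*(n:ℝ)/104 + 1) := by rw [hLdef]; ring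
      rw [heq]
      exact mul_le_mul_of_nonneg_left h (by norm_num)
    calc L ^ ((5:ℝ)/3) ≤ (104/3 * Real.exp (7*(n:ℝ)/104)) ^ ((5:ℝ)/3) :=
          Real.rpow_le_rpow hL.le hLe (by norm_num)
      _ = (104/3:ℝ) ^ ((5:ℝ)/3) * Real.exp (7*(n:ℝ)/104) ^ ((5:ℝ)/3) :=
          Real.mul_rpow (by norm_num) (Real.exp_nonneg _)
      _ = (104/3:ℝ) ^ ((5:ℝ)/3) * Real.exp ((7*(n:ℝ)/104) * (5/3)) := by rw [Real.exp_mul]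
      _ ≤ 369 * Real.exp ((7*(n:ℝ)/104) * (5/3)) :=
          mul_le_mul_of_nonneg_right cube_bound (Real.exp_nonneg _)
  -- small-factor bounds
  have hA1 : (1001/400:ℝ) * 369 * (7/3)^14 * Real.exp (-(16428/875)) ≤ 1 := by
    calc (1001/400:ℝ) * 369 * (7/3)^14 * Real.exp (-(16428/875))
        ≤ Real.exp (16428/875) * Real.exp (-(16428/875)) :=
          mul_le_mul_of_nonneg_right numA (Real.exp_nonneg _)
      _ = 1 := by rw [← Real.exp_add, add_neg_cancel, Real.exp_zero]
  have hq1 : (7/3:ℝ) * Real.exp (-(23767/19500)) ≤ 1 := by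
    have ha : (7/3:ℝ) ≤ Real.exp (23767/19500) := by
      have h1 := Real.exp_one_gt_d9
      have h2 : Real.exp 1 ≤ Real.exp (23767/19500) := Real.exp_le_exp.2 (by norm_num)
      linarith
    calc (7/3:ℝ) * Real.exp (-(23767/19500))
        ≤ Real.exp (23767/19500) * Real.exp (-(23767/19500)) :=
          mul_le_mul_of_nonneg_right ha (Real.exp_nonneg _)
      _ = 1 := by rw [← Real.exp_add, add_neg_cancel, Real.exp_zero]
  have hq0 : (0:ℝ) ≤ (7/3:ℝ) * Real.exp (-(23767/19500)) := by positivity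
  -- exp-merging identity
  have key1 : Real.exp (6/7) * Real.exp ((7*(n:ℝ)/104) * (5/3)) *
      Real.exp ((n:ℝ)+14 + 1 - 999/1000*L)
      = Real.exp (-(16428/875)) * Real.exp (-(23767/19500)) ^ n := by
    rw [← Real.exp_nat_mul, ← Real.exp_add, ← Real.exp_add, ← Real.exp_add]
    congr 1
    rw [hLdef]
    push_cast
    ring
  -- main chain
  calc (1 + 1 / 1000) * (Real.exp 1 * lam / ((n:ℝ) + 14)) ^ N *
        Real.exp (1 - 999/1000 * lam) * (5 / 2) * lam ^ ((5 : ℝ) / 3)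
      = 1001/400 * (Real.exp ((n:ℝ)+14) * lam ^ N / ((n:ℝ)+14) ^ N) *
        (Real.exp (1 - 999/1000*lam) * lam ^ ((5:ℝ)/3)) := by
        rw [div_pow, mul_pow, ← Real.exp_nat_mul, mul_one, hNc]
        ring
    _ ≤ 1001/400 * (Real.exp ((n:ℝ)+14) * (L ^ N * Real.exp (((n:ℝ)+14)*t)) /
          ((n:ℝ)+14) ^ N) *
        (Real.exp (1 - 999/1000*lam) * (L ^ ((5:ℝ)/3) * Real.exp (t*(5/3)))) := by
        gcongr
    _ = 1001/400 * (L/((n:ℝ)+14)) ^ N * L ^ ((5:ℝ)/3) *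
        (Real.exp ((n:ℝ)+14) * Real.exp (((n:ℝ)+14)*t) * Real.exp (1 - 999/1000*lam) *
          Real.exp (t*(5/3))) := by
        rw [div_pow]
        ring
    _ ≤ 1001/400 * ((7/3:ℝ) ^ N * Real.exp (6/7)) * (369 * Real.exp ((7*(n:ℝ)/104) * (5/3))) *
        Real.exp ((n:ℝ)+14 + 1 - 999/1000*L) := by
        have hx : (0:ℝ) ≤ (L/((n:ℝ)+14)) ^ N := by positivity
        have he4 : Real.exp ((n:ℝ)+14) * Real.exp (((n:ℝ)+14)*t) *
            Real.exp (1 - 999/1000*lam) * Real.exp (t*(5/3))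
            ≤ Real.exp ((n:ℝ)+14 + 1 - 999/1000*L) := by
          rw [← Real.exp_add, ← Real.exp_add, ← Real.exp_add]
          exact Real.exp_le_exp.2 h4
        gcongr 1001/400 * ?_ * ?_ * ?_ <;> first | exact h5 | exact h6 | exact he4 | skip
    _ = (1001/400 * 369 * (7/3:ℝ)^14) * ((7/3:ℝ)^n) *
        (Real.exp (6/7) * Real.exp ((7*(n:ℝ)/104) * (5/3)) *
          Real.exp ((n:ℝ)+14 + 1 - 999/1000*L)) := by
        rw [hNdef, pow_add]
        ring
    _ = (1001/400 * 369 * (7/3:ℝ)^14 * Real.exp (-(16428/875))) *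
        (((7/3:ℝ) * Real.exp (-(23767/19500))) ^ n) := by
        rw [key1, mul_pow]
        ring
    _ ≤ 1 * 1 := by
        have hpl := pow_le_one₀ hq0 hq1 (n := n)
        have h0 : (0:ℝ) ≤ ((7/3:ℝ) * Real.exp (-(23767/19500))) ^ n := by positivity
        exact mul_le_mul hA1 hpl h0 (by norm_num)
    _ = 1 := by norm_num

theorem stmt_14 (k : ℕ) (hk : 15 ≤ k) (lam : ℝ) (hlam : (7 * (k : ℝ) - 1) / 3 ≤ lam) :
    (1 + 1 / 1000) * (Real.exp 1 * lam / ((k : ℝ) - 1)) ^ (k - 1) *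
      Real.exp (1 - (1 - 1 / 1000) * lam) * (5 / 2) * lam ^ ((5 : ℝ) / 3) ≤ 1 := by
  obtain ⟨n, rfl⟩ : ∃ n, k = n + 15 := ⟨k - 15, by omega⟩
  have e1 : (n + 15) - 1 = n + 14 := by omega
  have e2 : (((n + 15 : ℕ)) : ℝ) - 1 = (n:ℝ) + 14 := by push_cast; ring
  have e3 : (7 * (((n + 15 : ℕ)) : ℝ) - 1) / 3 = (7*(n:ℝ)+104)/3 := by push_cast; ring
  rw [e1, e2]
  exact key n lam (e3 ▸ hlam)
end

section
/- Let G be a finite simple graph, H a spanning subgraph of G, and let K = V(G^{(k)}) denote the vertex set of the k-core of G. Define B = { u ∈ K : u has at least k neighbors in K in the graph H }. Let F be any spanning subgraph of G satisfying E(H) ⊆ E(F) ⊆ E(G) such that every edge of E(G) \ E(F) has both endpoints in B. Then the k-core of F has the same vertex set as the k-core of G, i.e., V(F^{(k)}) = K. -/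
/-- The vertex set of the `k`-core of a graph: the union of all vertex sets `S`
such that every vertex of `S` has at least `k` neighbors inside `S`
(equivalently, the vertex set of the maximal subgraph of minimum degree `≥ k`). -/
def coreSet {V : Type*} (G : SimpleGraph V) (k : ℕ) : Set V :=
  ⋃₀ {S : Set V | ∀ v ∈ S, k ≤ (S ∩ G.neighborSet v).ncard}

lemma coreSet_self {V : Type*} [Fintype V] (G : SimpleGraph V) (k : ℕ) :
    ∀ v ∈ coreSet G k, k ≤ (coreSet G k ∩ G.neighborSet v).ncard := by
  intro v hv
  obtain ⟨S, hS, hvS⟩ := hv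
  calc k ≤ (S ∩ G.neighborSet v).ncard := hS v hvS
    _ ≤ (coreSet G k ∩ G.neighborSet v).ncard :=
      Set.ncard_le_ncard (Set.inter_subset_inter_left _ (Set.subset_sUnion_of_mem hS))
        (Set.toFinite _)

theorem stmt_17 {V : Type*} [Fintype V] (k : ℕ) (G H F : SimpleGraph V)
    (hHG : H ≤ G) (hHF : H ≤ F) (hFG : F ≤ G)
    (B : Set V)
    (hB : B = {u ∈ coreSet G k | k ≤ (coreSet G k ∩ H.neighborSet u).ncard})
    (hedges : ∀ u v : V, G.Adj u v → ¬ F.Adj u v → u ∈ B ∧ v ∈ B) :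
    coreSet F k = coreSet G k := by
  apply le_antisymm
  · intro v hv
    obtain ⟨S, hS, hvS⟩ := hv
    refine ⟨S, fun w hw => ?_, hvS⟩
    calc k ≤ (S ∩ F.neighborSet w).ncard := hS w hw
      _ ≤ (S ∩ G.neighborSet w).ncard :=
        Set.ncard_le_ncard (Set.inter_subset_inter_right _ (fun x hx => hFG hx))
          (Set.toFinite _)
  · have key : ∀ v ∈ coreSet G k, k ≤ (coreSet G k ∩ F.neighborSet v).ncard := by
      intro v hv
      by_cases hvB : v ∈ B
      · rw [hB] at hvB
        calc k ≤ (coreSet G k ∩ H.neighborSet v).ncard := hvB.2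
          _ ≤ (coreSet G k ∩ F.neighborSet v).ncard :=
            Set.ncard_le_ncard (Set.inter_subset_inter_right _ (fun x hx => hHF hx))
              (Set.toFinite _)
      · calc k ≤ (coreSet G k ∩ G.neighborSet v).ncard := coreSet_self G k v hv
          _ ≤ (coreSet G k ∩ F.neighborSet v).ncard := by
            apply Set.ncard_le_ncard _ (Set.toFinite _)
            rintro x ⟨hxK, hxadj⟩
            refine ⟨hxK, ?_⟩
            by_contra hFadj
            exact hvB (hedges v x hxadj hFadj).1
    exact fun v hv => ⟨coreSet G k, key, hv⟩
end
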